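/- Let G be a countable group acting on a measure space by measure-preserving maps, H a Hilbert space of the form L²(X), and suppose {u₁, …, u_N} is an orthonormal set such that for each γ in an infinite subgroup G' there is a unitary N×N matrix U(γ) with T_γ u_j = Σ_k U(γ)_{jk} u_k, where T_γ u = e^{i f_γ} γ* u is a unitary operator, and X has a fundamental domain F for the G'-action with Σ_{γ ∈ G'} ∫_F |γ* u|² = ‖u‖² for all u. Then N = |G'| · Σ_k ∫_F |u_k|², contradicting |G'| = ∞; hence no eigenspace invariant under all T_γ can be finite-dimensional and nonzero. -/

import Mathlib

open MeasureTheory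

private lemma normsq_eq (z : ℂ) : ‖z‖ ^ 2 = Complex.normSq z := by
  rw [Complex.normSq_eq_norm_sq]

private lemma unitary_row_sum {N : ℕ} (U : Matrix (Fin N) (Fin N) ℂ)
    (hU : U ∈ Matrix.unitaryGroup (Fin N) ℂ) (w : Fin N → ℂ) :
    ∑ j : Fin N, ‖∑ k : Fin N, U j k * w k‖ ^ 2 = ∑ k : Fin N, ‖w k‖ ^ 2 := by
  have h1 : star U * U = 1 := (Matrix.mem_unitaryGroup_iff'.mp hU)
  have horth : ∀ k l : Fin N, ∑ j : Fin N, (starRingEnd ℂ) (U j l) * U j k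
      = if l = k then 1 else 0 := by
    intro k l
    have := congrArg (fun M => M l k) h1
    simpa [Matrix.mul_apply, Matrix.one_apply, Matrix.star_apply] using this
  have : ((∑ j : Fin N, ‖∑ k : Fin N, U j k * w k‖ ^ 2 : ℝ) : ℂ)
      = ((∑ k : Fin N, ‖w k‖ ^ 2 : ℝ) : ℂ) := by
    push_cast
    calc ∑ j : Fin N, (‖∑ k : Fin N, U j k * w k‖ : ℂ) ^ 2
        = ∑ j : Fin N, (∑ k : Fin N, U j k * w k) *
            (starRingEnd ℂ) (∑ k : Fin N, U j k * w k) := by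
          refine Finset.sum_congr rfl fun j _ => ?_
          rw [Complex.mul_conj]
          norm_cast
          exact normsq_eq _
      _ = ∑ j : Fin N, ∑ k : Fin N, ∑ l : Fin N,
            (w k * (starRingEnd ℂ) (w l)) * ((starRingEnd ℂ) (U j l) * U j k) := by
          refine Finset.sum_congr rfl fun j _ => ?_
          rw [map_sum, Finset.sum_mul_sum]
          refine Finset.sum_congr rfl fun k _ => Finset.sum_congr rfl fun l _ => ?_
          simp only [map_mul]; ring
      _ = ∑ k : Fin N, ∑ l : Fin N,
            (w k * (starRingEnd ℂ) (w l)) * ∑ j : Fin N, (starRingEnd ℂ) (U j l) * U j k := by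
          rw [Finset.sum_comm]
          refine Finset.sum_congr rfl fun k _ => ?_
          rw [Finset.sum_comm]
          refine Finset.sum_congr rfl fun l _ => ?_
          rw [Finset.mul_sum]
      _ = ∑ k : Fin N, (w k * (starRingEnd ℂ) (w k)) := by
          refine Finset.sum_congr rfl fun k _ => ?_
          rw [Finset.sum_eq_single k]
          · rw [horth k k]; simp
          · intro l _ hlk; rw [horth k l, if_neg hlk, mul_zero]
          · simp
      _ = ∑ k : Fin N, (‖w k‖ : ℂ) ^ 2 := by
          refine Finset.sum_congr rfl fun k _ => ?_
          rw [Complex.mul_conj]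
          norm_cast
          exact (normsq_eq _).symm
  exact_mod_cast this

/-- Suppose `u₁, …, u_N` is an orthonormal family in `L²(X, μ)`, and
for each `γ` in an infinite (countable) index group `G'` the translated family
`v γ j = T_γ u_j` is obtained by a unitary `N×N` matrix `U(γ)`, i.e.
`T_γ u_j = Σ_k U(γ)_{jk} u_k`, and `F ⊆ X` is a fundamental domain in the sense that
`Σ_{γ ∈ G'} ∫_F |T_γ u_j|² = ‖u_j‖²` for each `j`.  Then (counting)
`Σ_k ∫_F |u_k|² = 0` and `N = 0`: no such orthonormal family of positive finite
cardinality exists, i.e. no finite-dimensional nonzero eigenspace is invariant under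
all magnetic translations. -/
theorem no_finite_dimensional_invariant_eigenspace
    {X : Type*} [MeasurableSpace X] (μ : Measure X)
    (F : Set X) (hF : MeasurableSet F)
    (G : Type*) [Countable G] [Infinite G]
    (N : ℕ) (u : Fin N → X → ℂ)
    (hmeas : ∀ j, AEStronglyMeasurable (u j) μ)
    (horth : ∀ j k : Fin N,
      ∫ x, u j x * (starRingEnd ℂ) (u k x) ∂μ = if j = k then 1 else 0)
    (v : G → Fin N → X → ℂ)
    (hunitary : ∀ γ : G, ∃ U : Matrix (Fin N) (Fin N) ℂ,
      U ∈ Matrix.unitaryGroup (Fin N) ℂ ∧ ∀ (j : Fin N) (x : X),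
        v γ j x = ∑ k : Fin N, U j k * u k x)
    (htile : ∀ j : Fin N,
      ∑' γ : G, ∫ x in F, ‖v γ j x‖^2 ∂μ = ∫ x, ‖u j x‖^2 ∂μ) :
    (∑ k : Fin N, ∫ x in F, ‖u k x‖^2 ∂μ) = 0 ∧ N = 0 := by
  have hptwise : ∀ j x, u j x * (starRingEnd ℂ) (u j x) = ((‖u j x‖ ^ 2 : ℝ) : ℂ) := by
    intro j x
    rw [Complex.mul_conj]
    norm_cast
    exact (normsq_eq _).symm
  -- ∫ ‖u j‖² = 1, and ‖u j ·‖² is integrable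
  have hone : ∀ j : Fin N, ∫ x, ((‖u j x‖ ^ 2 : ℝ) : ℂ) ∂μ = 1 := by
    intro j
    have h := horth j j
    rw [if_pos rfl] at h
    rw [show (fun x => u j x * (starRingEnd ℂ) (u j x))
        = fun x => ((‖u j x‖ ^ 2 : ℝ) : ℂ) from funext (hptwise j)] at h
    exact h
  have hnorm1 : ∀ j : Fin N, ∫ x, ‖u j x‖ ^ 2 ∂μ = 1 := by
    intro j
    have h := hone j
    have h2 : ∫ x, ((‖u j x‖ ^ 2 : ℝ) : ℂ) ∂μ = ((∫ x, ‖u j x‖ ^ 2 ∂μ : ℝ) : ℂ) :=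
      integral_ofReal
    rw [h2] at h
    exact_mod_cast h
  have hint : ∀ j : Fin N, Integrable (fun x => ‖u j x‖ ^ 2) μ := by
    intro j
    by_contra hni
    have : ¬ Integrable (fun x => ((‖u j x‖ ^ 2 : ℝ) : ℂ)) μ := by
      intro hI
      refine hni ?_
      have h2 := hI.re
      simpa only [RCLike.re_to_complex, Complex.ofReal_re] using h2
    have h3 := hone j
    rw [integral_undef this] at h3
    exact one_ne_zero h3.symm
  -- the dominating function g
  set g : X → ℝ := fun x => ∑ k : Fin N, ‖u k x‖ ^ 2 with hg
  have hgint : Integrable g μ := integrable_finset_sum _ fun k _ => hint k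
  -- each ‖v γ j‖² is integrable
  have hvmeas : ∀ (γ : G) (j : Fin N),
      AEStronglyMeasurable (fun x => ‖v γ j x‖ ^ 2) μ := by
    intro γ j
    obtain ⟨U, hU, hv⟩ := hunitary γ
    have : AEStronglyMeasurable (v γ j) μ := by
      rw [show v γ j = fun x => ∑ k : Fin N, U j k * u k x from funext (hv j)]
      exact Finset.aestronglyMeasurable_fun_sum _ fun k _ => (hmeas k).const_mul _
    exact (this.norm.pow 2).congr (by filter_upwards with x; simp)
  have hvint : ∀ (γ : G) (j : Fin N), Integrable (fun x => ‖v γ j x‖ ^ 2) μ := by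
    intro γ j
    obtain ⟨U, hU, hv⟩ := hunitary γ
    refine hgint.mono (hvmeas γ j) ?_
    filter_upwards with x
    have hsum : ∑ i : Fin N, ‖v γ i x‖ ^ 2 = g x := by
      rw [hg]
      simp only [hv]
      exact unitary_row_sum U hU (fun k => u k x)
    have h1 : ‖v γ j x‖ ^ 2 ≤ g x := by
      rw [← hsum]
      exact Finset.single_le_sum (f := fun i => ‖v γ i x‖ ^ 2)
        (fun i _ => by positivity) (Finset.mem_univ j)
    have h2 : (0:ℝ) ≤ g x := by rw [← hsum]; positivity
    simpa [abs_of_nonneg (by positivity : (0:ℝ) ≤ ‖v γ j x‖ ^ 2), abs_of_nonneg h2]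
      using h1
  -- the constant c
  set c : ℝ := ∑ k : Fin N, ∫ x in F, ‖u k x‖ ^ 2 ∂μ with hc
  have hrowsum : ∀ γ : G, ∑ j : Fin N, ∫ x in F, ‖v γ j x‖ ^ 2 ∂μ = c := by
    intro γ
    obtain ⟨U, hU, hv⟩ := hunitary γ
    rw [hc, ← integral_finset_sum _ fun j _ => (hvint γ j).restrict,
        ← integral_finset_sum _ fun k _ => (hint k).restrict]
    refine integral_congr_ae ?_
    filter_upwards with x
    simp only [hv]
    exact unitary_row_sum U hU (fun k => u k x)
  -- summability of each row
  have hsummable : ∀ j : Fin N, Summable (fun γ : G => ∫ x in F, ‖v γ j x‖ ^ 2 ∂μ) := by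
    intro j
    by_contra hns
    have := htile j
    rw [tsum_eq_zero_of_not_summable hns, hnorm1 j] at this
    exact one_ne_zero this.symm
  -- constant c is summable over infinite G
  have hcsum : Summable (fun _ : G => c) := by
    have hs : Summable (fun γ : G => ∑ j : Fin N, ∫ x in F, ‖v γ j x‖ ^ 2 ∂μ) :=
      summable_sum fun j _ => hsummable j
    exact hs.congr fun γ => hrowsum γ
  have hc0 : c = 0 := (summable_const_iff c).mp hcsum
  -- now N = 0
  have hN : (N : ℝ) = 0 := by
    have h1 : ∑' γ : G, ∑ j : Fin N, ∫ x in F, ‖v γ j x‖ ^ 2 ∂μ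
        = ∑ j : Fin N, ∑' γ : G, ∫ x in F, ‖v γ j x‖ ^ 2 ∂μ :=
      Summable.tsum_finsetSum fun j _ => hsummable j
    have h2 : ∑' γ : G, ∑ j : Fin N, ∫ x in F, ‖v γ j x‖ ^ 2 ∂μ = 0 := by
      rw [tsum_congr hrowsum, hc0]
      exact tsum_zero
    rw [h2] at h1
    have h3 : ∑ j : Fin N, ∑' γ : G, ∫ x in F, ‖v γ j x‖ ^ 2 ∂μ = (N : ℝ) := by
      rw [Finset.sum_congr rfl fun j _ => (htile j).trans (hnorm1 j)]
      simp
    rw [h3] at h1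
    exact h1.symm
  exact ⟨hc0, by exact_mod_cast hN⟩
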